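/- Submodularity of the s-perimeter: for measurable sets E, F ⊆ ℝ^n and an open set Ω, Per_s(E ∩ F, Ω) + Per_s(E ∪ F, Ω) ≤ Per_s(E, Ω) + Per_s(F, Ω), provided the right-hand side is finite. -/

import Mathlib

open MeasureTheory

/-- The interaction energy `L(A,B) = ∫_A ∫_B |x-y|^{-(n+s)} dx dy`. -/
noncomputable def interL (n : ℕ) (s : ℝ) (A B : Set (EuclideanSpace ℝ (Fin n))) : ENNReal :=
  ∫⁻ x in A, ∫⁻ y in B, ENNReal.ofReal (1 / ‖x - y‖ ^ ((n : ℝ) + s))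

/-- The fractional `s`-perimeter `Per_s(E, Ω) = L(E ∩ Ω, ℝⁿ \ E) + L(E \ Ω, Ω \ E)`. -/
noncomputable def fracPer (n : ℕ) (s : ℝ) (E Ω : Set (EuclideanSpace ℝ (Fin n))) : ENNReal :=
  interL n s (E ∩ Ω) Eᶜ + interL n s (E \ Ω) (Ω \ E)

set_option maxHeartbeats 1000000 in
/-- submodularity of the fractional `s`-perimeter. -/
theorem stmt_12 (n : ℕ) (s : ℝ) (hs : s ∈ Set.Ioo (0 : ℝ) 1)
    (Ω : Set (EuclideanSpace ℝ (Fin n))) (hΩ : IsOpen Ω)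
    (E F : Set (EuclideanSpace ℝ (Fin n))) (hE : MeasurableSet E) (hF : MeasurableSet F)
    (hfin : fracPer n s E Ω + fracPer n s F Ω ≠ ⊤) :
    fracPer n s (E ∩ F) Ω + fracPer n s (E ∪ F) Ω ≤ fracPer n s E Ω + fracPer n s F Ω := by
  classical
  have hK : Measurable fun p : (EuclideanSpace ℝ (Fin n)) × (EuclideanSpace ℝ (Fin n)) =>
      ENNReal.ofReal (1 / ‖p.1 - p.2‖ ^ ((n : ℝ) + s)) := by
    apply Measurable.ennreal_ofReal
    exact measurable_const.div ((continuous_fst.sub continuous_snd).norm.rpow_const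
      (fun p => Or.inr (add_nonneg (Nat.cast_nonneg n) hs.1.le))).measurable
  set K : (EuclideanSpace ℝ (Fin n)) → (EuclideanSpace ℝ (Fin n)) → ENNReal :=
    fun x y => ENNReal.ofReal (1 / ‖x - y‖ ^ ((n : ℝ) + s)) with hKdef
  set g : Set (EuclideanSpace ℝ (Fin n)) → (EuclideanSpace ℝ (Fin n)) → ENNReal :=
    fun B x => ∫⁻ y in B, K x y with hgdef
  have hgm : ∀ B : Set (EuclideanSpace ℝ (Fin n)), Measurable (g B) :=
    fun B => Measurable.lintegral_prod_right hK
  have hgmono : ∀ (x : EuclideanSpace ℝ (Fin n)) (B C : Set (EuclideanSpace ℝ (Fin n))),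
      B ⊆ C → g B x ≤ g C x := fun x B C h => lintegral_mono_set h
  have hgadd : ∀ (x : EuclideanSpace ℝ (Fin n)) (B C : Set (EuclideanSpace ℝ (Fin n))),
      MeasurableSet B → MeasurableSet C →
      g (B ∪ C) x + g (B ∩ C) x = g B x + g C x := by
    intro x B C hB hC
    have hKx : Measurable (K x) := by
      apply Measurable.ennreal_ofReal
      exact measurable_const.div ((continuous_const.sub continuous_id).norm.rpow_const
        (fun p => Or.inr (add_nonneg (Nat.cast_nonneg n) hs.1.le))).measurable
    have hw : ∀ (D : Set (EuclideanSpace ℝ (Fin n))), MeasurableSet D →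
        g D x = (volume.withDensity (K x)) D := by
      intro D hD
      rw [withDensity_apply _ hD]
    rw [hw _ (hB.union hC), hw _ (hB.inter hC), hw _ hB, hw _ hC]
    exact measure_union_add_inter B hC
  have hΩm : MeasurableSet Ω := hΩ.measurableSet
  have key : ∀ (G : Set (EuclideanSpace ℝ (Fin n))), MeasurableSet G →
      fracPer n s G Ω
        = ∫⁻ x, ((G ∩ Ω).indicator (g Gᶜ) x + (G \ Ω).indicator (g (Ω \ G)) x) := by
    intro G hG
    have h1 : interL n s (G ∩ Ω) Gᶜ = ∫⁻ x, (G ∩ Ω).indicator (g Gᶜ) x := by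
      rw [lintegral_indicator (hG.inter hΩm)]
      rfl
    have h2 : interL n s (G \ Ω) (Ω \ G) = ∫⁻ x, (G \ Ω).indicator (g (Ω \ G)) x := by
      rw [lintegral_indicator (hG.diff hΩm)]
      rfl
    rw [fracPer, h1, h2,
      lintegral_add_left ((hgm _).indicator (hG.inter hΩm))]
  rw [key E hE, key F hF, key (E ∩ F) (hE.inter hF), key (E ∪ F) (hE.union hF),
    ← lintegral_add_left (f := fun x => (E ∩ F ∩ Ω).indicator (g (E ∩ F)ᶜ) x
      + ((E ∩ F) \ Ω).indicator (g (Ω \ (E ∩ F))) x)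
      (((hgm _).indicator ((hE.inter hF).inter hΩm)).add
      ((hgm _).indicator ((hE.inter hF).diff hΩm))),
    ← lintegral_add_left (f := fun x => (E ∩ Ω).indicator (g Eᶜ) x
      + (E \ Ω).indicator (g (Ω \ E)) x)
      (((hgm _).indicator (hE.inter hΩm)).add
      ((hgm _).indicator (hE.diff hΩm)))]
  apply lintegral_mono
  intro x
  have hEF1 : Ω \ (E ∩ F) = (Ω \ E) ∪ (Ω \ F) := by ext y; simp; tauto
  have hEF2 : Ω \ (E ∪ F) = (Ω \ E) ∩ (Ω \ F) := by ext y; simp; tauto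
  by_cases hxE : x ∈ E <;> by_cases hxF : x ∈ F <;> by_cases hxΩ : x ∈ Ω <;>
    simp only [Set.indicator_apply, Set.mem_inter_iff, Set.mem_union, Set.mem_diff,
      hxE, hxF, hxΩ, true_and, false_and, and_true, and_false,
      true_or, or_true, false_or, or_false, not_true, not_false_iff,
      if_true, if_false, ite_true, ite_false, add_zero, zero_add, le_refl]
  · rw [Set.compl_inter, Set.compl_union]
    exact (hgadd x Eᶜ Fᶜ hE.compl hF.compl).le
  · rw [hEF1, hEF2]
    exact (hgadd x (Ω \ E) (Ω \ F) (hΩm.diff hE) (hΩm.diff hF)).le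
  · exact hgmono x _ _ (Set.compl_subset_compl.mpr Set.subset_union_left)
  · exact hgmono x _ _ (Set.diff_subset_diff_right Set.subset_union_left)
  · exact hgmono x _ _ (Set.compl_subset_compl.mpr Set.subset_union_right)
  · exact hgmono x _ _ (Set.diff_subset_diff_right Set.subset_union_right)
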